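/- Let R be a graded ring supported in non-negative degrees, M a graded R-module bounded below in degree, N a submodule of M, and {x_i} a collection of elements of N. If every element of N admits a reduced expression in terms of the x_i, then {x_i} is a Gröbner basis for N. -/
import Mathlib


open DirectSum

section Defs

variable {A : Type*} [CommRing A] (𝒜 : ℤ → AddSubgroup A) [GradedRing 𝒜]
variable {M : Type*} [AddCommGroup M] [Module A M] (ℳ : ℤ → AddSubgroup M)
  [DirectSum.Decomposition ℳ]

/-- The degree of an element of a graded object: the largest `n` whose homogeneous
component is nonzero (junk value for `x = 0`). -/
noncomputable def mdeg {σ M : Type*} [AddCommMonoid M] [SetLike σ M] [AddSubmonoidClass σ M]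
    (ℳ : ℤ → σ) [DirectSum.Decomposition ℳ] (x : M) : ℤ :=
  sSup {n : ℤ | (DirectSum.decompose ℳ x n : M) ≠ 0}

/-- The initial (top-degree) term of an element. -/
noncomputable def ini {σ M : Type*} [AddCommMonoid M] [SetLike σ M] [AddSubmonoidClass σ M]
    (ℳ : ℤ → σ) [DirectSum.Decomposition ℳ] (x : M) : M :=
  (DirectSum.decompose ℳ x (mdeg ℳ x) : M)

/-- The initial submodule of a submodule `N`: generated by initial terms of nonzero
elements of `N`. -/
def iniSub (N : Submodule A M) : Submodule A M :=
  Submodule.span A {m : M | ∃ x ∈ N, x ≠ 0 ∧ ini ℳ x = m}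

/-- The ring grading is supported in non-negative degrees. -/
def RingNonnegGraded : Prop := ∀ n < (0 : ℤ), ∀ a ∈ 𝒜 n, a = (0 : A)

/-- The module grading is bounded below. -/
def ModuleBddBelow : Prop := ∃ n₀ : ℤ, ∀ n < n₀, ∀ m ∈ ℳ n, m = (0 : M)

/-- A family of elements of `N` is a Gröbner basis for `N`. -/
def IsGrobnerBasis {I : Type*} (N : Submodule A M) (x : I → M) : Prop :=
  (∀ i, x i ∈ N) ∧
    Submodule.span A (Set.range fun i => ini ℳ (x i)) = iniSub ℳ N

/-- `a` gives a reduced expression `y = ∑ aᵢ xᵢ` with `deg aᵢ + deg xᵢ ≤ deg y`. -/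
def IsReducedExpr {I : Type*} (x : I → M) (y : M) (a : I →₀ A) : Prop :=
  y = a.sum (fun i c => c • x i) ∧
    ∀ i ∈ a.support, mdeg 𝒜 (a i) + mdeg ℳ (x i) ≤ mdeg ℳ y

/-- Set version of a Gröbner basis. -/
def IsGrobnerBasisSet (N : Submodule A M) (s : Set M) : Prop :=
  s ⊆ (N : Set M) ∧ Submodule.span A (ini ℳ '' s) = iniSub ℳ N

/-- `y` has a reduced expression in terms of the elements of `s`. -/
def HasReducedExprSet (s : Set M) (y : M) : Prop :=
  ∃ a : M →₀ A, ↑a.support ⊆ s ∧ y = a.sum (fun m c => c • m) ∧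
    ∀ m ∈ a.support, mdeg 𝒜 (a m) + mdeg ℳ m ≤ mdeg ℳ y

/-- A submodule is homogeneous when it contains all homogeneous components of its
elements. -/
def IsHomogSubmodule (N : Submodule A M) : Prop :=
  ∀ x ∈ N, ∀ n : ℤ, (DirectSum.decompose ℳ x n : M) ∈ N

/-- Graded-coherent: finitely generated, and every finitely generated homogeneous
submodule is finitely presented. -/
def GradedCoherent : Prop :=
  Module.Finite A M ∧ ∀ N : Submodule A M, N.FG → IsHomogSubmodule ℳ N →
    Module.FinitePresentation A N

/-- Gröbner-coherent: graded-coherent, and every finitely generated (possibly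
inhomogeneous) submodule admits a finite Gröbner basis. -/
def GrobnerCoherent : Prop :=
  GradedCoherent (A := A) ℳ ∧ ∀ N : Submodule A M, N.FG →
    ∃ s : Finset M, IsGrobnerBasisSet ℳ N ↑s

/-- A homogeneous generating family of syzygies of the initial terms of the `x i`
(with the free module graded by `deg eᵢ = deg xᵢ`). -/
def IsHomogSyzygyGens {I J : Type*} (x : I → M) (c : J → I →₀ A) : Prop :=
  (∀ j, ∃ d : ℤ, ∀ i, c j i ∈ 𝒜 (d - mdeg ℳ (x i))) ∧
    Submodule.span A (Set.range c) =
      LinearMap.ker (Finsupp.linearCombination A fun i => ini ℳ (x i))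

/-- Set version of a homogeneous generating set of syzygies of initial terms. -/
def IsHomogSyzygyGensSet (X : Set M) (C : Set (M →₀ A)) : Prop :=
  (∀ c ∈ C, ↑c.support ⊆ X) ∧
  (∀ c ∈ C, ∃ d : ℤ, ∀ m : M, c m ∈ 𝒜 (d - mdeg ℳ m)) ∧
  Submodule.span A C =
    Finsupp.supported A A X ⊓
      LinearMap.ker (Finsupp.linearCombination A fun m : M => ini ℳ m)

/-- The elements `z = ∑ c m • m` attached to a set of syzygies `C`. -/
def zElems (C : Set (M →₀ A)) : Set M :=
  (fun c : M →₀ A => c.sum fun m coeff => coeff • m) '' C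

/-- One step of Buchberger's algorithm: adjoin the `z`-elements of a homogeneous
generating set of syzygies. -/
def BuchbergerStep (X Y : Set M) : Prop :=
  ∃ C : Set (M →₀ A), IsHomogSyzygyGensSet 𝒜 ℳ X C ∧ Y = X ∪ zElems C

end Defs


section H

variable {σ M : Type*} [AddCommMonoid M] [SetLike σ M] [AddSubmonoidClass σ M]
  (ℳ : ℤ → σ) [DirectSum.Decomposition ℳ]

lemma mdeg_set_finite (x : M) : {n : ℤ | (DirectSum.decompose ℳ x n : M) ≠ 0}.Finite := by
  classical
  apply (DFinsupp.support (DirectSum.decompose ℳ x)).finite_toSet.subset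
  intro n hn
  simp only [Set.mem_setOf_eq] at hn
  simp only [Finset.mem_coe, DFinsupp.mem_support_iff]
  exact fun h => hn (by rw [h]; rfl)

lemma le_mdeg {x : M} {n : ℤ} (h : (DirectSum.decompose ℳ x n : M) ≠ 0) : n ≤ mdeg ℳ x :=
  le_csSup (mdeg_set_finite ℳ x).bddAbove h

lemma decompose_eq_zero_of_mdeg_lt {x : M} {n : ℤ} (h : mdeg ℳ x < n) :
    (DirectSum.decompose ℳ x n : M) = 0 := by
  by_contra hc
  exact absurd (le_mdeg ℳ hc) (not_le.mpr h)

end H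

section Smul
open scoped Classical
variable {A M : Type*} [CommRing A] (𝒜 : ℤ → AddSubgroup A) [GradedRing 𝒜]
  [AddCommGroup M] [Module A M] (ℳ : ℤ → AddSubgroup M) [DirectSum.Decomposition ℳ]
  [SetLike.GradedSMul 𝒜 ℳ]

lemma decompose_coe_sum {ι : Type*} (s : Finset ι) (f : ι → M) (D : ℤ) :
    (DirectSum.decompose ℳ (∑ j ∈ s, f j) D : M)
      = ∑ j ∈ s, (DirectSum.decompose ℳ (f j) D : M) := by
  classical
  induction s using Finset.cons_induction with
  | empty => simp
  | cons j s hj ih =>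
    rw [Finset.sum_cons, Finset.sum_cons, DirectSum.decompose_add, ← ih,
      DirectSum.add_apply, AddSubgroup.coe_add]

lemma decompose_smul_expand (a : A) (m : M) (D : ℤ) :
    (DirectSum.decompose ℳ (a • m) D : M)
      = ∑ n ∈ DFinsupp.support (DirectSum.decompose 𝒜 a),
          ∑ k ∈ DFinsupp.support (DirectSum.decompose ℳ m),
            (DirectSum.decompose ℳ
              ((DirectSum.decompose 𝒜 a n : A) • (DirectSum.decompose ℳ m k : M)) D : M) := by
  classical
  have hsum : a • m = ∑ n ∈ DFinsupp.support (DirectSum.decompose 𝒜 a),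
      ∑ k ∈ DFinsupp.support (DirectSum.decompose ℳ m),
        (DirectSum.decompose 𝒜 a n : A) • (DirectSum.decompose ℳ m k : M) := by
    conv_lhs => rw [← DirectSum.sum_support_decompose 𝒜 a,
      ← DirectSum.sum_support_decompose ℳ m]
    rw [Finset.sum_smul]
    exact Finset.sum_congr rfl fun n _ => Finset.smul_sum
  rw [hsum, decompose_coe_sum]
  exact Finset.sum_congr rfl fun n _ => decompose_coe_sum ℳ _ _ _

lemma decompose_smul_eq_zero (a : A) (m : M) (D : ℤ) (hD : mdeg 𝒜 a + mdeg ℳ m < D) :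
    (DirectSum.decompose ℳ (a • m) D : M) = 0 := by
  classical
  rw [decompose_smul_expand 𝒜 ℳ]
  apply Finset.sum_eq_zero
  intro n hn
  apply Finset.sum_eq_zero
  intro k hk
  have hn' : n ≤ mdeg 𝒜 a := le_mdeg 𝒜 (by
    rw [DFinsupp.mem_support_iff] at hn
    simpa using hn)
  have hk' : k ≤ mdeg ℳ m := le_mdeg ℳ (by
    rw [DFinsupp.mem_support_iff] at hk
    simpa using hk)
  have hmem := SetLike.GradedSMul.smul_mem (A := 𝒜) (B := ℳ)
    (DirectSum.decompose 𝒜 a n).2 (DirectSum.decompose ℳ m k).2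
  rw [vadd_eq_add] at hmem
  exact DirectSum.decompose_of_mem_ne ℳ hmem (by omega)

lemma decompose_smul_top (a : A) (m : M) :
    (DirectSum.decompose ℳ (a • m) (mdeg 𝒜 a + mdeg ℳ m) : M) = ini 𝒜 a • ini ℳ m := by
  classical
  rw [decompose_smul_expand 𝒜 ℳ]
  have key : ∀ (n k : ℤ), n ≤ mdeg 𝒜 a → k ≤ mdeg ℳ m → ¬(n = mdeg 𝒜 a ∧ k = mdeg ℳ m) →
      (DirectSum.decompose ℳ
        ((DirectSum.decompose 𝒜 a n : A) • (DirectSum.decompose ℳ m k : M))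
        (mdeg 𝒜 a + mdeg ℳ m) : M) = 0 := by
    intro n k hn hk hne
    have hmem := SetLike.GradedSMul.smul_mem (A := 𝒜) (B := ℳ)
      (DirectSum.decompose 𝒜 a n).2 (DirectSum.decompose ℳ m k).2
    rw [vadd_eq_add] at hmem
    exact DirectSum.decompose_of_mem_ne ℳ hmem (by omega)
  rw [Finset.sum_eq_single (mdeg 𝒜 a)]
  · rw [Finset.sum_eq_single (mdeg ℳ m)]
    · have hmem := SetLike.GradedSMul.smul_mem (A := 𝒜) (B := ℳ)
        (DirectSum.decompose 𝒜 a (mdeg 𝒜 a)).2 (DirectSum.decompose ℳ m (mdeg ℳ m)).2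
      rw [vadd_eq_add] at hmem
      exact DirectSum.decompose_of_mem_same ℳ hmem
    · intro k hk hkne
      refine key _ _ le_rfl (le_mdeg ℳ ?_) (by tauto)
      rw [DFinsupp.mem_support_iff] at hk
      simpa using hk
    · intro h
      rw [DFinsupp.mem_support_iff, not_not] at h
      have h0 : (DirectSum.decompose ℳ m (mdeg ℳ m) : M) = 0 := by rw [h]; rfl
      rw [h0, smul_zero, DirectSum.decompose_zero]
      rfl
  · intro n hn hne
    apply Finset.sum_eq_zero
    intro k hk
    refine key _ _ (le_mdeg 𝒜 ?_) (le_mdeg ℳ ?_) (by tauto)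
    · rw [DFinsupp.mem_support_iff] at hn
      simpa using hn
    · rw [DFinsupp.mem_support_iff] at hk
      simpa using hk
  · intro h
    rw [DFinsupp.mem_support_iff, not_not] at h
    have h0 : (DirectSum.decompose 𝒜 a (mdeg 𝒜 a) : A) = 0 := by rw [h]; rfl
    apply Finset.sum_eq_zero
    intro k _
    rw [h0, zero_smul, DirectSum.decompose_zero]
    rfl

end Smul

/-- If every element of `N` admits a reduced expression in terms of the `xᵢ ∈ N`, then
`{xᵢ}` is a Gröbner basis for `N`. -/
theorem stmt_1 {A M : Type*} [CommRing A] (𝒜 : ℤ → AddSubgroup A) [GradedRing 𝒜]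
    [AddCommGroup M] [Module A M] (ℳ : ℤ → AddSubgroup M) [DirectSum.Decomposition ℳ]
    [SetLike.GradedSMul 𝒜 ℳ]
    (hA : RingNonnegGraded 𝒜) (hM : ModuleBddBelow ℳ)
    {I : Type*} (N : Submodule A M) (x : I → M) (hx : ∀ i, x i ∈ N)
    (hred : ∀ y ∈ N, ∃ a : I →₀ A, IsReducedExpr 𝒜 ℳ x y a) :
    IsGrobnerBasis ℳ N x := by
  classical
  refine ⟨hx, le_antisymm ?_ ?_⟩
  · rw [Submodule.span_le]
    rintro _ ⟨i, rfl⟩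
    by_cases h : x i = 0
    · have : ini ℳ (x i) = 0 := by simp [ini, h]
      show ini ℳ (x i) ∈ (iniSub ℳ N : Set M)
      rw [this]
      exact Submodule.zero_mem _
    · exact Submodule.subset_span ⟨x i, hx i, h, rfl⟩
  · rw [iniSub, Submodule.span_le]
    rintro _ ⟨y, hyN, hy0, rfl⟩
    obtain ⟨a, ha1, ha2⟩ := hred y hyN
    set D := mdeg ℳ y with hD
    have hini : ini ℳ y = ∑ i ∈ a.support, (DirectSum.decompose ℳ (a i • x i) D : M) := by
      show (DirectSum.decompose ℳ y D : M) = _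
      rw [ha1, Finsupp.sum, decompose_coe_sum]
    rw [hini]
    apply Submodule.sum_mem
    intro i hi
    rcases lt_or_eq_of_le (ha2 i hi) with hlt | heq
    · rw [decompose_smul_eq_zero 𝒜 ℳ _ _ _ hlt]
      exact Submodule.zero_mem _
    · rw [← heq, decompose_smul_top 𝒜 ℳ]
      exact Submodule.smul_mem _ _ (Submodule.subset_span ⟨i, rfl⟩)
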